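/- The extended RFC rule fails PART: in the SOCG with N = {1,2}, π = (1,2), v({1}) = v({2}) = 0, v({1,2}) = 1, the RFC rule awards the full value 1 to player 1, while player 2, who is contributional (v({1,2}) > v({1})), receives 0. -/
import Mathlib


open Classical in
/-- The RFC rule for the two-player game with arrival order `(0, 1)`: player `0` first
receives `v {0}`; when player `1` arrives, the whole marginal value `v {0,1} - v {0}`
is awarded to the earliest-arrived player of
`C = {j : v {0,1} > v ({0,1} \ {j})}`. -/
noncomputable def rfc2 (v : Finset (Fin 2) → ℝ) (p : Fin 2) : ℝ :=
  let C : Finset (Fin 2) :=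
    Finset.univ.filter (fun j => v {0, 1} > v (({0, 1} : Finset (Fin 2)).erase j))
  let winner : Fin 2 := if (0 : Fin 2) ∈ C then 0 else 1
  (if p = 0 then v {0} else 0) + (if p = winner then v {0, 1} - v {0} else 0)

/-- The (extended) RFC rule fails PART: in the SOCG with two players `0, 1` arriving in
order `(0, 1)`, `v {0} = v {1} = 0` and `v {0,1} = 1`, RFC awards the full value `1` to
player `0`, while player `1`, who is contributional (`v {0,1} > v {0}`), receives `0`. -/
theorem erfc_fails_part (v : Finset (Fin 2) → ℝ)
    (hnorm : v ∅ = 0) (h0 : v {0} = 0) (h1 : v {1} = 0) (h01 : v {0, 1} = 1) :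
    rfc2 v 0 = 1 ∧ rfc2 v 1 = 0 ∧ v {0, 1} > v (({0, 1} : Finset (Fin 2)).erase 1) := by
  have e0 : (({0, 1} : Finset (Fin 2)).erase 0) = {1} := by decide
  have e1 : (({0, 1} : Finset (Fin 2)).erase 1) = {0} := by decide
  refine ⟨?_, ?_, ?_⟩ <;> simp [rfc2, e0, e1, h0, h1, h01] <;> norm_num
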